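/- Fix N ≥ 1, b ∈ ℝ, nonzero reals p_i with p_i⁻¹ ≠ b and −p_i⁻¹ ≠ b, constants a_{i,1}, a_{i,2}, ξ_{i0}, η_{i0} ∈ ℝ, and impose the period-2 reduction q_i = −p_i for all i. Let τ_n be the associated Casoratian. Then for every n ∈ ℤ, on all of ℝ⁴: ∂_{x₋₂}τ_n = (Σ_{i=1}^{N} p_i⁻²) · τ_n; in particular ∂_{x₋₂}τ_n is a constant multiple of τ_n with the same constant for all n. -/

import Mathlib

/-- Partial derivative in `x₁`. -/
noncomputable def pd1 (F : ℝ → ℝ → ℝ → ℝ → ℝ) : ℝ → ℝ → ℝ → ℝ → ℝ :=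
  fun x1 x2 xm1 xm2 => deriv (fun t => F t x2 xm1 xm2) x1

/-- Partial derivative in `x₂`. -/
noncomputable def pd2 (F : ℝ → ℝ → ℝ → ℝ → ℝ) : ℝ → ℝ → ℝ → ℝ → ℝ :=
  fun x1 x2 xm1 xm2 => deriv (fun t => F x1 t xm1 xm2) x2

/-- Partial derivative in `x₋₁`. -/
noncomputable def pdm1 (F : ℝ → ℝ → ℝ → ℝ → ℝ) : ℝ → ℝ → ℝ → ℝ → ℝ :=
  fun x1 x2 xm1 xm2 => deriv (fun t => F x1 x2 t xm2) xm1

/-- Partial derivative in `x₋₂`. -/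
noncomputable def pdm2 (F : ℝ → ℝ → ℝ → ℝ → ℝ) : ℝ → ℝ → ℝ → ℝ → ℝ :=
  fun x1 x2 xm1 xm2 => deriv (fun t => F x1 x2 xm1 t) xm2

/-- The functions ψ_i^{(n)} of (x₁, x₂, x₋₁, x₋₂). -/
noncomputable def psi {N : ℕ} (b : ℝ) (p q a1 a2 ξ0 η0 : Fin N → ℝ)
    (i : Fin N) (n : ℤ) : ℝ → ℝ → ℝ → ℝ → ℝ :=
  fun x1 x2 xm1 xm2 =>
    a1 i * ((p i)⁻¹ - b) ^ n *
      Real.exp (x1 / ((p i)⁻¹ - b) + x2 / ((p i)⁻¹ - b) ^ 2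
        + (p i)⁻¹ * xm1 + ((p i)⁻¹) ^ 2 * xm2 + ξ0 i)
    + a2 i * ((q i)⁻¹ - b) ^ n *
      Real.exp (x1 / ((q i)⁻¹ - b) + x2 / ((q i)⁻¹ - b) ^ 2
        + (q i)⁻¹ * xm1 + ((q i)⁻¹) ^ 2 * xm2 + η0 i)

/-- The Casoratian τ_n = det[(ψ_i^{(n+j-1)})]. -/
noncomputable def tau {N : ℕ} (b : ℝ) (p q a1 a2 ξ0 η0 : Fin N → ℝ)
    (n : ℤ) : ℝ → ℝ → ℝ → ℝ → ℝ :=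
  fun x1 x2 xm1 xm2 =>
    Matrix.det (Matrix.of fun i j : Fin N =>
      psi b p q a1 a2 ξ0 η0 i (n + (j : ℕ)) x1 x2 xm1 xm2)


lemma psi_fact {N : ℕ} (b : ℝ) (p q a1 a2 ξ0 η0 : Fin N → ℝ)
    (hq : ∀ i, q i = -p i) (i : Fin N) (m : ℤ) (x1 x2 xm1 t : ℝ) :
    psi b p q a1 a2 ξ0 η0 i m x1 x2 xm1 t
      = Real.exp (((p i)⁻¹) ^ 2 * t) * psi b p q a1 a2 ξ0 η0 i m x1 x2 xm1 0 := by
  simp only [psi, hq i, inv_neg, neg_sq, mul_zero, add_zero]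
  rw [show (x1 / ((p i)⁻¹ - b) + x2 / ((p i)⁻¹ - b) ^ 2 + (p i)⁻¹ * xm1 + (p i)⁻¹ ^ 2 * t + ξ0 i)
        = ((p i)⁻¹ ^ 2 * t) + (x1 / ((p i)⁻¹ - b) + x2 / ((p i)⁻¹ - b) ^ 2 + (p i)⁻¹ * xm1 + ξ0 i)
        from by ring,
      show (x1 / (-(p i)⁻¹ - b) + x2 / (-(p i)⁻¹ - b) ^ 2 + -(p i)⁻¹ * xm1 + (p i)⁻¹ ^ 2 * t + η0 i)
        = ((p i)⁻¹ ^ 2 * t) + (x1 / (-(p i)⁻¹ - b) + x2 / (-(p i)⁻¹ - b) ^ 2 + -(p i)⁻¹ * xm1 + η0 i)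
        from by ring,
      Real.exp_add]
  simp only [Real.exp_add]
  ring

lemma tau_fact {N : ℕ} (b : ℝ) (p q a1 a2 ξ0 η0 : Fin N → ℝ)
    (hq : ∀ i, q i = -p i) (n : ℤ) (x1 x2 xm1 t : ℝ) :
    tau b p q a1 a2 ξ0 η0 n x1 x2 xm1 t
      = Real.exp ((∑ i : Fin N, ((p i)⁻¹) ^ 2) * t) * tau b p q a1 a2 ξ0 η0 n x1 x2 xm1 0 := by
  unfold tau
  have h : (Matrix.of fun i j : Fin N => psi b p q a1 a2 ξ0 η0 i (n + (j : ℕ)) x1 x2 xm1 t)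
      = Matrix.of fun i j : Fin N => Real.exp (((p i)⁻¹) ^ 2 * t)
        * psi b p q a1 a2 ξ0 η0 i (n + (j : ℕ)) x1 x2 xm1 0 := by
    ext i j
    exact psi_fact b p q a1 a2 ξ0 η0 hq i _ x1 x2 xm1 t
  rw [h]
  exact (Matrix.det_mul_column (fun i => Real.exp (((p i)⁻¹) ^ 2 * t))
    (Matrix.of fun i j : Fin N => psi b p q a1 a2 ξ0 η0 i (n + (j : ℕ)) x1 x2 xm1 0)).trans
    (by rw [← Real.exp_sum, ← Finset.sum_mul])

/-- under the period-2 reduction q_i = −p_i, the Casoratian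
satisfies ∂_{x₋₂}τ_n = (Σ p_i⁻²)·τ_n, the same constant for all n. -/
theorem tau_period_two_eigen {N : ℕ} (hN : 1 ≤ N) (b : ℝ)
    (p q a1 a2 ξ0 η0 : Fin N → ℝ)
    (hp : ∀ i, p i ≠ 0)
    (hpb : ∀ i, (p i)⁻¹ ≠ b) (hpb' : ∀ i, -(p i)⁻¹ ≠ b)
    (hq : ∀ i, q i = -p i) :
    ∀ (n : ℤ) (x1 x2 xm1 xm2 : ℝ),
      pdm2 (tau b p q a1 a2 ξ0 η0 n) x1 x2 xm1 xm2
      = (∑ i : Fin N, ((p i)⁻¹) ^ 2) * tau b p q a1 a2 ξ0 η0 n x1 x2 xm1 xm2 := by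
  intro n x1 x2 xm1 xm2
  have hf : (fun t => tau b p q a1 a2 ξ0 η0 n x1 x2 xm1 t)
      = (fun t => Real.exp ((∑ i : Fin N, ((p i)⁻¹) ^ 2) * t)
          * tau b p q a1 a2 ξ0 η0 n x1 x2 xm1 0) :=
    funext (tau_fact b p q a1 a2 ξ0 η0 hq n x1 x2 xm1)
  have hD := (((hasDerivAt_id xm2).const_mul (∑ i : Fin N, ((p i)⁻¹) ^ 2)).exp.mul_const
    (tau b p q a1 a2 ξ0 η0 n x1 x2 xm1 0))
  simp only [id_eq] at hD
  unfold pdm2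
  rw [hf, hD.deriv, tau_fact b p q a1 a2 ξ0 η0 hq n x1 x2 xm1 xm2]
  ring
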